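/- Theorem 1 (performance gap of full mixture reuse, formal version). In the bivariate log-linear setup with feasible sets S(p₁), let p̃₁, p₁' ∈ Δ^{d₁−1}, let r*(p̃₁) minimize F(·, p̃₁) over S(p̃₁) and r*(p₁') minimize F(·, p₁') over S(p₁'), and assume: (i) for each p₁ the map r ↦ F(r, p₁) is μ-strongly convex on Δ^{d₂} with μ > 0; (ii) mutual feasibility, i.e. r*(p̃₁) ∈ S(p₁') and r*(p₁') ∈ S(p̃₁). Write q*(p̃₁) := Φ_{p̃₁}(r*(p̃₁)) and q* := Φ_{p₁'}(r*(p₁')), and assume q* is the minimizer of the full (unreused) mixing problem, so that p₁' equals the normalized restriction of q* to the first d₁ coordinates. Let a_max := max_{1≤i≤n} ‖A_{i,1}‖₂. Then F(q*(p̃₁)) − F(q*) ≤ C·‖p̃₁ − p₁'‖, where C = F̄(q*)·exp(a_max·‖p̃₁ − p₁'‖)·( (F̄(q*(p̃₁))/μ)·‖α_fix + α_comp‖·κ(α_fix, α_comp) + ‖α_fix‖ ). -/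

import Mathlib

noncomputable section
open scoped RealInnerProductSpace BigOperators

/-- Euclidean space `ℝ^m`. -/
abbrev Euc (m : ℕ) := EuclideanSpace ℝ (Fin m)

/-- Build a vector of `ℝ^m` from its coordinates. -/
def vecOf {m : ℕ} (f : Fin m → ℝ) : Euc m := (WithLp.equiv 2 _).symm f

/-- The probability simplex in `ℝ^m`. -/
def probSimplex (m : ℕ) : Set (Euc m) := {p | (∀ i, 0 ≤ p i) ∧ ∑ i, p i = 1}

/-- A point of the collapsed space `ℝ^{1+d₂}` from `(ρ, b₂)`; coordinate `0` is `ρ`. -/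
def pairR {d₂ : ℕ} (ρ : ℝ) (b₂ : Fin d₂ → ℝ) : Euc (d₂ + 1) := vecOf (Fin.cons ρ b₂)

/-- The collapsed simplex `Δ^{d₂} = {(ρ, b₂) : ρ ≥ 0, b₂ ≥ 0, ρ + Σ_j (b₂)_j = 1}`. -/
def collapsedSimplex (d₂ : ℕ) : Set (Euc (d₂ + 1)) := probSimplex (d₂ + 1)

/-- A point of the full space `ℝ^{d₁+d₂}` from its two blocks of coordinates. -/
def pairQ {d₁ d₂ : ℕ} (x : Fin d₁ → ℝ) (y : Fin d₂ → ℝ) : Euc (d₁ + d₂) :=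
  vecOf (Fin.append x y)

/-- The expansion map `Φ_{p₁}(ρ, b₂) = (ρ·p₁, b₂)`. -/
def Phi {d₁ d₂ : ℕ} (p₁ : Euc d₁) (r : Euc (d₂ + 1)) : Euc (d₁ + d₂) :=
  pairQ (fun j => r 0 * p₁ j) (fun j => r j.succ)

variable {n d₁ d₂ : ℕ}

/-- `⟨A_i, q⟩` where `A_i = (A_{i,1}, A_{i,2})`. -/
def innerA (A₁ : Fin n → Euc d₁) (A₂ : Fin n → Euc d₂) (i : Fin n) (q : Euc (d₁ + d₂)) : ℝ :=
  ⟪pairQ (A₁ i) (A₂ i), q⟫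

/-- `F̄(q) = (1/n)·Σ_i exp(⟨A_i, q⟩)`. -/
def Fbar (A₁ : Fin n → Euc d₁) (A₂ : Fin n → Euc d₂) (q : Euc (d₁ + d₂)) : ℝ :=
  (1 / (n : ℝ)) * ∑ i, Real.exp (innerA A₁ A₂ i q)

/-- `F(q) = (1/n)·Σ_i (c_i + exp(⟨A_i, q⟩))`. -/
def Ffull (c : Fin n → ℝ) (A₁ : Fin n → Euc d₁) (A₂ : Fin n → Euc d₂)
    (q : Euc (d₁ + d₂)) : ℝ :=
  (1 / (n : ℝ)) * ∑ i, (c i + Real.exp (innerA A₁ A₂ i q))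

/-- The bivariate objective `F(r, p₁) := F(Φ_{p₁}(r))`. -/
def Fb (c : Fin n → ℝ) (A₁ : Fin n → Euc d₁) (A₂ : Fin n → Euc d₂)
    (r : Euc (d₂ + 1)) (p₁ : Euc d₁) : ℝ :=
  Ffull c A₁ A₂ (Phi p₁ r)


/-- Collapsed feasible set
`S(p₁) = {(ρ, b₂) ∈ Δ^{d₂} : ρ ≤ min_j k·N_j'/(R·(p₁)_j), (b₂)_j ≤ k·N_{d₁+j}'/R}`. -/
def feasR (d₁ d₂ : ℕ) (N' : Fin (d₁ + d₂) → ℝ) (k R : ℝ) (p₁ : Euc d₁) :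
    Set (Euc (d₂ + 1)) :=
  {r | r ∈ collapsedSimplex d₂ ∧
    r 0 ≤ ⨅ j : Fin d₁, k * N' (Fin.castAdd d₂ j) / (R * p₁ j) ∧
    ∀ j : Fin d₂, r j.succ ≤ k * N' (Fin.natAdd d₁ j) / R}

/-- Feasible set of the full (unreused) mixing problem,
`{q ∈ Δ^{d₁+d₂−1} : q_j ≤ k·N_j'/R}`. -/
def feasQ (d₁ d₂ : ℕ) (N' : Fin (d₁ + d₂) → ℝ) (k R : ℝ) : Set (Euc (d₁ + d₂)) :=
  {q | q ∈ probSimplex (d₁ + d₂) ∧ ∀ j, q j ≤ k * N' j / R}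

/-- The coupling term `κ(α_fix, α_comp) = ‖(𝟏 + α_fix + α_comp) ⊙ α_fix‖`. -/
def kappa {n d₁ d₂ : ℕ} (A₁ : Fin n → Euc d₁) (A₂ : Fin n → Euc d₂) : ℝ :=
  ‖vecOf (fun i => (1 + ‖A₁ i‖ + ‖A₂ i‖) * ‖A₁ i‖)‖


lemma exp_gap (b δ M : ℝ) (hδ : |δ| ≤ M) :
    Real.exp (b + δ) - Real.exp b ≤ Real.exp b * (|δ| * Real.exp M) := by
  have h2 := Real.add_one_le_exp (-|δ|)
  have h3 : Real.exp δ ≤ Real.exp |δ| := Real.exp_le_exp.mpr (le_abs_self δ)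
  have h4 : Real.exp |δ| ≤ Real.exp M := Real.exp_le_exp.mpr hδ
  have h5 : (0:ℝ) < Real.exp b := Real.exp_pos b
  have h6 : (0:ℝ) < Real.exp |δ| := Real.exp_pos _
  have h7 : (0:ℝ) ≤ |δ| := abs_nonneg δ
  have h9 : Real.exp (-|δ|) * Real.exp |δ| = 1 := by rw [← Real.exp_add]; simp
  have hA : Real.exp |δ| - 1 ≤ |δ| * Real.exp |δ| := by
    nlinarith [mul_le_mul_of_nonneg_right h2 h6.le]
  have hB : Real.exp δ - 1 ≤ |δ| * Real.exp M := by
    nlinarith [mul_le_mul_of_nonneg_left h4 h7]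
  have h8 : Real.exp (b + δ) = Real.exp b * Real.exp δ := Real.exp_add b δ
  nlinarith [mul_le_mul_of_nonneg_left hB h5.le]

lemma norm_vecOf_le {m : ℕ} (e : Fin m → ℝ) (he : ∀ i, 0 ≤ e i) :
    ‖vecOf e‖ ≤ ∑ i, e i := by
  rw [show ‖vecOf e‖ = Real.sqrt (∑ i, ‖(vecOf e) i‖^2) from EuclideanSpace.norm_eq _]
  have h1 : ∀ i, (vecOf e) i = e i := fun i => rfl
  have h2 : ∑ i, ‖(vecOf e) i‖^2 ≤ (∑ i, e i)^2 := by
    simp only [h1, Real.norm_eq_abs, sq_abs]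
    exact Finset.sum_sq_le_sq_sum_of_nonneg (fun i _ => he i)
  calc Real.sqrt (∑ i, ‖(vecOf e) i‖^2) ≤ Real.sqrt ((∑ i, e i)^2) := Real.sqrt_le_sqrt h2
    _ = ∑ i, e i := Real.sqrt_sq (Finset.sum_nonneg fun i _ => he i)

lemma sum_mul_le_norm {m : ℕ} (e α : Fin m → ℝ) (he : ∀ i, 0 ≤ e i) :
    ∑ i, e i * α i ≤ (∑ i, e i) * ‖vecOf α‖ := by
  have h1 : ∑ i, e i * α i = ⟪vecOf e, vecOf α⟫ := by
    rw [PiLp.inner_apply]; simp [vecOf, RCLike.inner_apply]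
    exact Finset.sum_congr rfl fun i _ => mul_comm _ _
  rw [h1]
  calc ⟪vecOf e, vecOf α⟫ ≤ ‖vecOf e‖ * ‖vecOf α‖ := real_inner_le_norm _ _
    _ ≤ (∑ i, e i) * ‖vecOf α‖ :=
        mul_le_mul_of_nonneg_right (norm_vecOf_le e he) (norm_nonneg _)

lemma innerA_Phi_sub {n d₁ d₂ : ℕ} (A₁ : Fin n → Euc d₁) (A₂ : Fin n → Euc d₂) (i : Fin n)
    (p p' : Euc d₁) (r : Euc (d₂ + 1)) :
    innerA A₁ A₂ i (Phi p r) - innerA A₁ A₂ i (Phi p' r) = r 0 * ⟪A₁ i, p - p'⟫ := by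
  have key : ∀ (q : Euc d₁), innerA A₁ A₂ i (Phi q r)
      = r 0 * (∑ j, A₁ i j * q j) + ∑ j, A₂ i j * r j.succ := by
    intro q
    simp only [innerA, Phi, pairQ, vecOf, PiLp.inner_apply, RCLike.inner_apply,
      conj_trivial, WithLp.equiv_symm_apply, PiLp.toLp_apply, Fin.sum_univ_add, Fin.append_left,
      Fin.append_right, Finset.mul_sum]
    congr 1
    exact Finset.sum_congr rfl fun x _ => by ring
    exact Finset.sum_congr rfl fun x _ => by ring
  have hip : ⟪A₁ i, p - p'⟫ = ∑ j, A₁ i j * (p j - p' j) := by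
    rw [PiLp.inner_apply]
    simp [RCLike.inner_apply]
    exact Finset.sum_congr rfl fun x _ => mul_comm _ _
  rw [key, key, hip]
  simp only [mul_sub, Finset.sum_sub_distrib, Finset.mul_sum]
  ring

set_option maxHeartbeats 1000000 in
/-- **Theorem 1 (performance gap of full mixture reuse, formal version).**
In the bivariate log-linear setup with feasible sets `S(p₁)`, if `r*(p̃₁)` minimizes
`F(·, p̃₁)` over `S(p̃₁)`, `r*(p₁')` minimizes `F(·, p₁')` over `S(p₁')`, the map
`r ↦ F(r, p₁)` is `μ`-strongly convex on `Δ^{d₂}` for each `p₁`, mutual feasibility holds,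
and `q* = Φ_{p₁'}(r*(p₁'))` minimizes the full mixing problem, then
`F(q*(p̃₁)) − F(q*) ≤ C·‖p̃₁ − p₁'‖` with
`C = F̄(q*)·exp(a_max·‖p̃₁ − p₁'‖)·((F̄(q*(p̃₁))/μ)·‖α_fix + α_comp‖·κ + ‖α_fix‖)`. -/
theorem theorem1_performance_gap
    {n d₁ d₂ : ℕ} (hn : 0 < n) (hd₁ : 0 < d₁)
    (c : Fin n → ℝ) (hc : ∀ i, 0 < c i)
    (A₁ : Fin n → Euc d₁) (A₂ : Fin n → Euc d₂)
    (N' : Fin (d₁ + d₂) → ℝ) (hN : ∀ j, 0 < N' j)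
    {k R : ℝ} (hk : 0 < k) (hR : 0 < R)
    {μ : ℝ} (hμ : 0 < μ)
    (hsc : ∀ p₁ ∈ probSimplex d₁, ∀ x ∈ collapsedSimplex d₂, ∀ y ∈ collapsedSimplex d₂,
      Fb c A₁ A₂ x p₁ + ⟪gradient (fun r => Fb c A₁ A₂ r p₁) x, y - x⟫ +
        μ / 2 * ‖y - x‖ ^ 2 ≤ Fb c A₁ A₂ y p₁)
    {ptil₁ p₁' : Euc d₁} (hptil : ptil₁ ∈ probSimplex d₁) (hp₁' : p₁' ∈ probSimplex d₁)
    {rtil rstar : Euc (d₂ + 1)}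
    (hrtil : rtil ∈ feasR d₁ d₂ N' k R ptil₁)
    (hrtilmin : IsMinOn (fun r => Fb c A₁ A₂ r ptil₁) (feasR d₁ d₂ N' k R ptil₁) rtil)
    (hrstar : rstar ∈ feasR d₁ d₂ N' k R p₁')
    (hrstarmin : IsMinOn (fun r => Fb c A₁ A₂ r p₁') (feasR d₁ d₂ N' k R p₁') rstar)
    (hmf₁ : rtil ∈ feasR d₁ d₂ N' k R p₁')
    (hmf₂ : rstar ∈ feasR d₁ d₂ N' k R ptil₁)
    (hq : Phi p₁' rstar ∈ feasQ d₁ d₂ N' k R)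
    (hqmin : IsMinOn (Ffull c A₁ A₂) (feasQ d₁ d₂ N' k R) (Phi p₁' rstar)) :
    Ffull c A₁ A₂ (Phi ptil₁ rtil) - Ffull c A₁ A₂ (Phi p₁' rstar) ≤
      (Fbar A₁ A₂ (Phi p₁' rstar) * Real.exp ((⨆ i, ‖A₁ i‖) * ‖ptil₁ - p₁'‖) *
        ((Fbar A₁ A₂ (Phi ptil₁ rtil) / μ) * ‖vecOf (fun i => ‖A₁ i‖ + ‖A₂ i‖)‖ *
            kappa A₁ A₂ +
          ‖vecOf (fun i => ‖A₁ i‖)‖)) * ‖ptil₁ - p₁'‖ := by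
  set t := ‖ptil₁ - p₁'‖ with ht
  have ht0 : 0 ≤ t := norm_nonneg _
  set amax := ⨆ i, ‖A₁ i‖ with hamax
  have hbdd : BddAbove (Set.range fun i => ‖A₁ i‖) := (Set.finite_range _).bddAbove
  have hamax_ge : ∀ i, ‖A₁ i‖ ≤ amax := fun i => le_ciSup hbdd i
  set E := Real.exp (amax * t) with hE
  have hE0 : (0:ℝ) < E := Real.exp_pos _
  obtain ⟨⟨hpos, hsumr⟩, -, -⟩ := hrstar
  have hr0 : 0 ≤ rstar 0 := hpos 0
  have hr1 : rstar 0 ≤ 1 := by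
    rw [← hsumr]
    exact Finset.single_le_sum (fun i _ => hpos i) (Finset.mem_univ 0)
  have h1 : Fb c A₁ A₂ rtil ptil₁ ≤ Fb c A₁ A₂ rstar ptil₁ := hrtilmin hmf₂
  set b : Fin n → ℝ := fun i => innerA A₁ A₂ i (Phi p₁' rstar) with hb
  have hper : ∀ i : Fin n,
      Real.exp (innerA A₁ A₂ i (Phi ptil₁ rstar)) - Real.exp (b i)
        ≤ (Real.exp (b i) * ‖A₁ i‖) * (t * E) := by
    intro i
    set δ := innerA A₁ A₂ i (Phi ptil₁ rstar) - b i with hδdef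
    have hδ : δ = rstar 0 * ⟪A₁ i, ptil₁ - p₁'⟫ := innerA_Phi_sub A₁ A₂ i ptil₁ p₁' rstar
    have habs : |δ| ≤ ‖A₁ i‖ * t := by
      rw [hδ, abs_mul, abs_of_nonneg hr0]
      calc rstar 0 * |⟪A₁ i, ptil₁ - p₁'⟫| ≤ 1 * (‖A₁ i‖ * t) := by
            apply mul_le_mul hr1 (abs_real_inner_le_norm _ _) (abs_nonneg _) zero_le_one
        _ = ‖A₁ i‖ * t := one_mul _
    have hM : ‖A₁ i‖ * t ≤ amax * t := mul_le_mul_of_nonneg_right (hamax_ge i) ht0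
    have hgap := exp_gap (b i) δ (amax * t) (habs.trans hM)
    have hbd : b i + δ = innerA A₁ A₂ i (Phi ptil₁ rstar) := by rw [hδdef]; ring
    rw [hbd] at hgap
    calc Real.exp (innerA A₁ A₂ i (Phi ptil₁ rstar)) - Real.exp (b i)
        ≤ Real.exp (b i) * (|δ| * E) := hgap
      _ ≤ Real.exp (b i) * ((‖A₁ i‖ * t) * E) :=
          mul_le_mul_of_nonneg_left
            (mul_le_mul_of_nonneg_right habs hE0.le) (Real.exp_pos _).le
      _ = (Real.exp (b i) * ‖A₁ i‖) * (t * E) := by ring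
  have hsum2 : ∑ i, Real.exp (innerA A₁ A₂ i (Phi ptil₁ rstar)) - ∑ i, Real.exp (b i)
      ≤ ((∑ i, Real.exp (b i)) * ‖vecOf (fun i => ‖A₁ i‖)‖) * (t * E) := by
    calc ∑ i, Real.exp (innerA A₁ A₂ i (Phi ptil₁ rstar)) - ∑ i, Real.exp (b i)
        = ∑ i, (Real.exp (innerA A₁ A₂ i (Phi ptil₁ rstar)) - Real.exp (b i)) :=
          (Finset.sum_sub_distrib _ _).symm
      _ ≤ ∑ i, (Real.exp (b i) * ‖A₁ i‖) * (t * E) :=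
          Finset.sum_le_sum fun i _ => hper i
      _ = (∑ i, Real.exp (b i) * ‖A₁ i‖) * (t * E) := (Finset.sum_mul _ _ _).symm
      _ ≤ ((∑ i, Real.exp (b i)) * ‖vecOf (fun i => ‖A₁ i‖)‖) * (t * E) := by
          apply mul_le_mul_of_nonneg_right
            (sum_mul_le_norm _ _ fun i => (Real.exp_pos _).le)
          positivity
  have hn0 : (0:ℝ) ≤ 1 / n := by positivity
  have h2 : Fb c A₁ A₂ rstar ptil₁ - Fb c A₁ A₂ rstar p₁'
      ≤ (Fbar A₁ A₂ (Phi p₁' rstar) * ‖vecOf (fun i => ‖A₁ i‖)‖) * (t * E) := by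
    have hdiff : Fb c A₁ A₂ rstar ptil₁ - Fb c A₁ A₂ rstar p₁'
        = (1 / (n:ℝ)) * (∑ i, Real.exp (innerA A₁ A₂ i (Phi ptil₁ rstar))
            - ∑ i, Real.exp (b i)) := by
      simp only [Fb, Ffull, Finset.sum_add_distrib, hb]
      ring
    rw [hdiff]
    calc (1 / (n:ℝ)) * (∑ i, Real.exp (innerA A₁ A₂ i (Phi ptil₁ rstar))
            - ∑ i, Real.exp (b i))
        ≤ (1 / (n:ℝ)) * (((∑ i, Real.exp (b i)) * ‖vecOf (fun i => ‖A₁ i‖)‖) * (t * E)) :=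
          mul_le_mul_of_nonneg_left hsum2 hn0
      _ = (Fbar A₁ A₂ (Phi p₁' rstar) * ‖vecOf (fun i => ‖A₁ i‖)‖) * (t * E) := by
          simp only [Fbar, hb]; ring
  have hLHS : Ffull c A₁ A₂ (Phi ptil₁ rtil) - Ffull c A₁ A₂ (Phi p₁' rstar)
      ≤ (Fbar A₁ A₂ (Phi p₁' rstar) * ‖vecOf (fun i => ‖A₁ i‖)‖) * (t * E) := by
    have e1 : Ffull c A₁ A₂ (Phi ptil₁ rtil) = Fb c A₁ A₂ rtil ptil₁ := rfl
    have e2 : Ffull c A₁ A₂ (Phi p₁' rstar) = Fb c A₁ A₂ rstar p₁' := rfl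
    rw [e1, e2]
    linarith [h1, h2]
  have hFb1 : 0 ≤ Fbar A₁ A₂ (Phi p₁' rstar) := by
    unfold Fbar; positivity
  have hFb2 : 0 ≤ Fbar A₁ A₂ (Phi ptil₁ rtil) := by
    unfold Fbar; positivity
  have hκ : 0 ≤ kappa A₁ A₂ := norm_nonneg _
  have hX : 0 ≤ Fbar A₁ A₂ (Phi ptil₁ rtil) / μ * ‖vecOf (fun i => ‖A₁ i‖ + ‖A₂ i‖)‖ *
      kappa A₁ A₂ := by positivity
  refine hLHS.trans ?_
  have hα : (0:ℝ) ≤ ‖vecOf (fun i => ‖A₁ i‖)‖ := norm_nonneg _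
  have hkey := mul_nonneg (mul_nonneg hFb1 hE0.le) (mul_nonneg hX ht0)
  nlinarith [hkey]

end
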